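/- Let C be a compact convex body in the Euclidean plane that is not a circular disc. Then C has a non-isosceles cap: there exist an exterior point S and supporting lines through S touching C at P and Q with |SP| ≠ |SQ|. -/

import Mathlib

open scoped RealInnerProductSpace

/-- The line through `S` and `P` is a supporting (tangent) line of the convex
body `C`, touching it at `P`. -/
def IsTangentAt (C : Set (EuclideanSpace ℝ (Fin 2)))
    (S P : EuclideanSpace ℝ (Fin 2)) : Prop :=
  P ∈ C ∧ ∃ f : EuclideanSpace ℝ (Fin 2) →ₗ[ℝ] ℝ,
    f ≠ 0 ∧ f S = f P ∧ ∀ x ∈ C, f x ≤ f P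

noncomputable section AuxCircle

private def pt (x y : ℝ) : EuclideanSpace ℝ (Fin 2) := WithLp.toLp 2 ![x, y]

private lemma pt0 (x y : ℝ) : pt x y 0 = x := rfl
private lemma pt1 (x y : ℝ) : pt x y 1 = y := rfl

private lemma inner_expand (u x : EuclideanSpace ℝ (Fin 2)) :
    ⟪u, x⟫ = u 0 * x 0 + u 1 * x 1 := by
  simp [PiLp.inner_apply, Fin.sum_univ_two, RCLike.inner_apply]
  ring

private lemma dist_expand (x y : EuclideanSpace ℝ (Fin 2)) :
    dist x y = Real.sqrt ((x 0 - y 0) ^ 2 + (x 1 - y 1) ^ 2) := by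
  rw [EuclideanSpace.dist_eq]
  simp [Fin.sum_univ_two, Real.dist_eq, sq_abs]

private lemma fv_ne {ν : EuclideanSpace ℝ (Fin 2)} (hν : ν ≠ 0) :
    ((innerSL ℝ ν).toLinearMap : EuclideanSpace ℝ (Fin 2) →ₗ[ℝ] ℝ) ≠ 0 := by
  intro h
  apply hν
  have h2 := DFunLike.congr_fun h ν
  simp only [LinearMap.zero_apply, ContinuousLinearMap.coe_coe, innerSL_apply_apply] at h2
  exact inner_self_eq_zero.mp h2

private lemma pt01_ne : pt 0 1 ≠ 0 := by
  intro h
  have := congrFun (congrArg (fun z : EuclideanSpace ℝ (Fin 2) => (z : Fin 2 → ℝ)) h) 1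
  simp [pt1] at this

private lemma pt0m1_ne : pt 0 (-1) ≠ 0 := by
  intro h
  have := congrFun (congrArg (fun z : EuclideanSpace ℝ (Fin 2) => (z : Fin 2 → ℝ)) h) 1
  simp [pt1] at this

/-- If all caps are isosceles, every supporting line touches `C` in a single
point. -/
private lemma unique_argmax
    {C : Set (EuclideanSpace ℝ (Fin 2))}
    (hcomp : IsCompact C)
    (H : ∀ S P Q : EuclideanSpace ℝ (Fin 2), S ∉ C → IsTangentAt C S P →
      IsTangentAt C S Q → dist S P = dist S Q)
    {f : EuclideanSpace ℝ (Fin 2) →ₗ[ℝ] ℝ} (hf : f ≠ 0)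
    {P Q : EuclideanSpace ℝ (Fin 2)} (hP : P ∈ C) (hQ : Q ∈ C)
    (hPm : ∀ x ∈ C, f x ≤ f P) (hQm : ∀ x ∈ C, f x ≤ f Q) : P = Q := by
  by_contra hne
  have hd : 0 < dist P Q := dist_pos.2 hne
  obtain ⟨r, hr⟩ := hcomp.isBounded.subset_closedBall 0
  have hr0 : 0 ≤ r := by
    have := hr hP
    have := dist_nonneg (x := P) (y := 0)
    simp only [Metric.mem_closedBall] at *
    linarith
  set T : ℝ := (r + ‖Q‖ + 1) / dist P Q with hT
  have hT0 : 0 < T := div_pos (by positivity) hd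
  set S := Q + T • (Q - P) with hS
  have hSQ : S - Q = T • (Q - P) := by rw [hS]; abel
  have hTd : T * dist P Q = r + ‖Q‖ + 1 := by
    rw [hT, div_mul_cancel₀ _ hd.ne']
  have hSC : S ∉ C := by
    intro hSC
    have h1 : ‖S‖ ≤ r := by
      have := hr hSC
      simpa [Metric.mem_closedBall, dist_zero_right] using this
    have h2 : ‖T • (Q - P)‖ ≤ ‖S‖ + ‖Q‖ := by
      rw [← hSQ]
      exact norm_sub_le _ _
    have h3 : ‖T • (Q - P)‖ = T * dist P Q := by
      rw [norm_smul, Real.norm_eq_abs, abs_of_pos hT0, dist_comm P Q, dist_eq_norm]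
    rw [h3, hTd] at h2
    linarith
  have hfPQ : f P = f Q := le_antisymm (hQm P hP) (hPm Q hQ)
  have hfS : f S = f Q := by
    rw [hS]
    simp only [map_add, map_smul, map_sub, smul_eq_mul, hfPQ]
    ring
  have t1 : IsTangentAt C S P := ⟨hP, f, hf, hfS.trans hfPQ.symm, hPm⟩
  have t2 : IsTangentAt C S Q := ⟨hQ, f, hf, hfS, hQm⟩
  have hEq := H S P Q hSC t1 t2
  have e1 : dist S Q = T * dist P Q := by
    rw [dist_eq_norm, hSQ, norm_smul, Real.norm_eq_abs, abs_of_pos hT0,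
      dist_comm P Q, dist_eq_norm]
  have e2 : dist S P = (1 + T) * dist P Q := by
    have hSP : S - P = (1 + T) • (Q - P) := by
      rw [hS, add_smul, one_smul]
      abel
    rw [dist_eq_norm, hSP, norm_smul, Real.norm_eq_abs,
      abs_of_pos (by linarith : (0:ℝ) < 1 + T), dist_comm P Q, dist_eq_norm]
  rw [e1, e2] at hEq
  nlinarith

set_option maxHeartbeats 1000000 in
/-- Key computation: assuming all caps are isosceles, with `A` a highest and
`B` a lowest point of `C`, every supporting line of `C` lies at distance
`(A 1 - B 1)/2` from the midpoint of `A` and `B`. -/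
private lemma key_support
    {C : Set (EuclideanSpace ℝ (Fin 2))}
    (hcomp : IsCompact C)
    (H : ∀ S P Q : EuclideanSpace ℝ (Fin 2), S ∉ C → IsTangentAt C S P →
      IsTangentAt C S Q → dist S P = dist S Q)
    {A B : EuclideanSpace ℝ (Fin 2)} (hA : A ∈ C) (hB : B ∈ C)
    (hAmax : ∀ x ∈ C, x 1 ≤ A 1) (hBmin : ∀ x ∈ C, B 1 ≤ x 1)
    {ν : EuclideanSpace ℝ (Fin 2)} (hν : ‖ν‖ = 1)
    {P : EuclideanSpace ℝ (Fin 2)} (hP : P ∈ C)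
    (hPm : ∀ x ∈ C, ⟪ν, x⟫ ≤ ⟪ν, P⟫) :
    ⟪ν, P⟫ = (⟪ν, A⟫ + ⟪ν, B⟫) / 2 + (A 1 - B 1) / 2 := by
  have hν0' : ν ≠ 0 := by
    intro h; rw [h, norm_zero] at hν; exact one_ne_zero hν.symm
  have hunit : ν 0 * ν 0 + ν 1 * ν 1 = 1 := by
    have h1 := real_inner_self_eq_norm_mul_norm ν
    rw [inner_expand, hν, one_mul] at h1
    exact h1
  by_cases hz : ν 0 = 0
  · -- vertical direction: the supporting line is one of the two horizontal ones
    have h11 : ν 1 * ν 1 = 1 := by rw [hz] at hunit; linarith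
    rcases mul_self_eq_one_iff.mp h11 with h1 | h1
    · have hPA : P 1 = A 1 := by
        have h2 := hPm A hA
        rw [inner_expand ν A, inner_expand ν P, hz, h1] at h2
        have h3 := hAmax P hP
        nlinarith
      rw [inner_expand ν P, inner_expand ν A, inner_expand ν B, hz, h1, hPA]
      ring
    · have hPB : P 1 = B 1 := by
        have h2 := hPm B hB
        rw [inner_expand ν B, inner_expand ν P, hz, h1] at h2
        have h3 := hBmin P hP
        nlinarith
      rw [inner_expand ν P, inner_expand ν A, inner_expand ν B, hz, h1, hPB]
      ring
  · -- non-vertical direction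
    have habsz : |ν 0| ≠ 0 := abs_ne_zero.mpr hz
    set c := ⟪ν, P⟫ with hc
    have hcP : ν 0 * P 0 + ν 1 * P 1 = c := (inner_expand ν P).symm
    have hyM : P 1 ≤ A 1 := hAmax P hP
    have hym : B 1 ≤ P 1 := hBmin P hP
    have hP0 : P 0 = (c - ν 1 * P 1) / ν 0 := by
      field_simp
      linarith
    set Sa : EuclideanSpace ℝ (Fin 2) := pt ((c - ν 1 * A 1) / ν 0) (A 1) with hSa
    set Sb : EuclideanSpace ℝ (Fin 2) := pt ((c - ν 1 * B 1) / ν 0) (B 1) with hSb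
    have hSa1 : Sa 1 = A 1 := pt1 _ _
    have hSb1 : Sb 1 = B 1 := pt1 _ _
    have hSa0 : ν 0 * Sa 0 = c - ν 1 * A 1 := by
      rw [hSa, pt0]; field_simp
    have hSb0 : ν 0 * Sb 0 = c - ν 1 * B 1 := by
      rw [hSb, pt0]; field_simp
    have hSaν : ⟪ν, Sa⟫ = c := by
      rw [inner_expand, hSa1]; linarith
    have hSbν : ⟪ν, Sb⟫ = c := by
      rw [inner_expand, hSb1]; linarith
    have eq1 : ν 0 * (Sa 0 - A 0) = A 1 - P 1 := by
      have hAin := hPm A hA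
      rw [inner_expand ν A] at hAin
      have hsign : 0 ≤ ν 0 * (Sa 0 - A 0) := by
        have e : ν 0 * (Sa 0 - A 0) = c - ν 1 * A 1 - ν 0 * A 0 := by
          rw [mul_sub, hSa0]
        rw [e]; linarith
      by_cases hSaC : Sa ∈ C
      · have hSaP : Sa = P :=
          unique_argmax hcomp H (fv_ne hν0') hSaC hP
            (fun x hx => by
              show ⟪ν, x⟫ ≤ ⟪ν, Sa⟫
              rw [hSaν]; exact hPm x hx)
            (fun x hx => hPm x hx)
        have hSaA : Sa = A :=
          unique_argmax hcomp H (fv_ne pt01_ne) hSaC hA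
            (fun x hx => by
              show ⟪pt 0 1, x⟫ ≤ ⟪pt 0 1, Sa⟫
              rw [inner_expand, inner_expand, pt0, pt1, hSa1]
              simp only [zero_mul, one_mul, zero_add]
              exact hAmax x hx)
            (fun x hx => by
              show ⟪pt 0 1, x⟫ ≤ ⟪pt 0 1, A⟫
              rw [inner_expand, inner_expand, pt0, pt1]
              simp only [zero_mul, one_mul, zero_add]
              exact hAmax x hx)
        have hy : P 1 = A 1 := by rw [← hSaP]; exact hSa1
        rw [hy, hSaA]
        simp
      · have t1 : IsTangentAt C Sa P :=
          ⟨hP, (innerSL ℝ ν).toLinearMap, fv_ne hν0',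
            by show ⟪ν, Sa⟫ = ⟪ν, P⟫; rw [hSaν],
            fun x hx => hPm x hx⟩
        have t2 : IsTangentAt C Sa A :=
          ⟨hA, (innerSL ℝ (pt 0 1)).toLinearMap, fv_ne pt01_ne,
            by
              show ⟪pt 0 1, Sa⟫ = ⟪pt 0 1, A⟫
              rw [inner_expand, inner_expand, pt0, pt1, hSa1]
              ring,
            fun x hx => by
              show ⟪pt 0 1, x⟫ ≤ ⟪pt 0 1, A⟫
              rw [inner_expand, inner_expand, pt0, pt1]
              simp only [zero_mul, one_mul, zero_add]
              exact hAmax x hx⟩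
        have hdist := H Sa P A hSaC t1 t2
        have hdiff : Sa 0 - P 0 = ν 1 * (P 1 - A 1) / ν 0 := by
          rw [hSa, pt0, hP0]
          field_simp
          ring
        have hrad : (Sa 0 - P 0) ^ 2 + (Sa 1 - P 1) ^ 2
            = ((A 1 - P 1) / |ν 0|) ^ 2 := by
          rw [hSa1, hdiff, div_pow, div_pow, sq_abs]
          rw [div_add' _ _ _ (pow_ne_zero 2 hz), div_eq_div_iff (pow_ne_zero 2 hz) (pow_ne_zero 2 hz)]
          ring_nf
          linear_combination (ν 0 ^ 2 * (A 1 - P 1) ^ 2) * hunit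
        have hd1 : dist Sa P = (A 1 - P 1) / |ν 0| := by
          rw [dist_expand, hrad,
            Real.sqrt_sq (div_nonneg (by linarith) (abs_nonneg _))]
        have hd2 : dist Sa A = |Sa 0 - A 0| := by
          rw [dist_expand, hSa1]
          simp [Real.sqrt_sq_eq_abs]
        rw [hd1, hd2] at hdist
        have habs : |ν 0 * (Sa 0 - A 0)| = A 1 - P 1 := by
          rw [abs_mul]
          field_simp at hdist
          linarith
        rw [abs_of_nonneg hsign] at habs
        exact habs
    have eq2 : ν 0 * (Sb 0 - B 0) = P 1 - B 1 := by
      have hBin := hPm B hB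
      rw [inner_expand ν B] at hBin
      have hsign : 0 ≤ ν 0 * (Sb 0 - B 0) := by
        have e : ν 0 * (Sb 0 - B 0) = c - ν 1 * B 1 - ν 0 * B 0 := by
          rw [mul_sub, hSb0]
        rw [e]; linarith
      by_cases hSbC : Sb ∈ C
      · have hSbP : Sb = P :=
          unique_argmax hcomp H (fv_ne hν0') hSbC hP
            (fun x hx => by
              show ⟪ν, x⟫ ≤ ⟪ν, Sb⟫
              rw [hSbν]; exact hPm x hx)
            (fun x hx => hPm x hx)
        have hSbB : Sb = B :=
          unique_argmax hcomp H (fv_ne pt0m1_ne) hSbC hB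
            (fun x hx => by
              show ⟪pt 0 (-1), x⟫ ≤ ⟪pt 0 (-1), Sb⟫
              rw [inner_expand, inner_expand, pt0, pt1, hSb1]
              simp only [zero_mul, neg_one_mul, zero_add, neg_le_neg_iff]
              exact hBmin x hx)
            (fun x hx => by
              show ⟪pt 0 (-1), x⟫ ≤ ⟪pt 0 (-1), B⟫
              rw [inner_expand, inner_expand, pt0, pt1]
              simp only [zero_mul, neg_one_mul, zero_add, neg_le_neg_iff]
              exact hBmin x hx)
        have hy : P 1 = B 1 := by rw [← hSbP]; exact hSb1
        rw [hy, hSbB]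
        simp
      · have t1 : IsTangentAt C Sb P :=
          ⟨hP, (innerSL ℝ ν).toLinearMap, fv_ne hν0',
            by show ⟪ν, Sb⟫ = ⟪ν, P⟫; rw [hSbν],
            fun x hx => hPm x hx⟩
        have t2 : IsTangentAt C Sb B :=
          ⟨hB, (innerSL ℝ (pt 0 (-1))).toLinearMap, fv_ne pt0m1_ne,
            by
              show ⟪pt 0 (-1), Sb⟫ = ⟪pt 0 (-1), B⟫
              rw [inner_expand, inner_expand, pt0, pt1, hSb1]
              ring,
            fun x hx => by
              show ⟪pt 0 (-1), x⟫ ≤ ⟪pt 0 (-1), B⟫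
              rw [inner_expand, inner_expand, pt0, pt1]
              simp only [zero_mul, neg_one_mul, zero_add, neg_le_neg_iff]
              exact hBmin x hx⟩
        have hdist := H Sb P B hSbC t1 t2
        have hdiff : Sb 0 - P 0 = ν 1 * (P 1 - B 1) / ν 0 := by
          rw [hSb, pt0, hP0]
          field_simp
          ring
        have hrad : (Sb 0 - P 0) ^ 2 + (Sb 1 - P 1) ^ 2
            = ((P 1 - B 1) / |ν 0|) ^ 2 := by
          rw [hSb1, hdiff, div_pow, div_pow, sq_abs]
          rw [div_add' _ _ _ (pow_ne_zero 2 hz), div_eq_div_iff (pow_ne_zero 2 hz) (pow_ne_zero 2 hz)]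
          ring_nf
          linear_combination (ν 0 ^ 2 * (P 1 - B 1) ^ 2) * hunit
        have hd1 : dist Sb P = (P 1 - B 1) / |ν 0| := by
          rw [dist_expand, hrad,
            Real.sqrt_sq (div_nonneg (by linarith) (abs_nonneg _))]
        have hd2 : dist Sb B = |Sb 0 - B 0| := by
          rw [dist_expand, hSb1]
          simp [Real.sqrt_sq_eq_abs]
        rw [hd1, hd2] at hdist
        have habs : |ν 0 * (Sb 0 - B 0)| = P 1 - B 1 := by
          rw [abs_mul]
          field_simp at hdist
          linarith
        rw [abs_of_nonneg hsign] at habs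
        exact habs
    rw [inner_expand ν A, inner_expand ν B]
    have e1 : ν 0 * Sa 0 - ν 0 * A 0 = A 1 - P 1 := by rw [← mul_sub]; exact eq1
    have e2 : ν 0 * Sb 0 - ν 0 * B 0 = P 1 - B 1 := by rw [← mul_sub]; exact eq2
    rw [hSa0] at e1
    rw [hSb0] at e2
    linarith

end AuxCircle

/-- A compact convex body in the plane that is not a circular disc has a
non-isosceles cap. -/
theorem non_disc_has_non_isosceles_cap
    (C : Set (EuclideanSpace ℝ (Fin 2)))
    (hcomp : IsCompact C) (hconv : Convex ℝ C)
    (hint : (interior C).Nonempty)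
    (hnotdisc : ∀ (O : EuclideanSpace ℝ (Fin 2)) (r : ℝ),
      C ≠ Metric.closedBall O r) :
    ∃ (S P Q : EuclideanSpace ℝ (Fin 2)), S ∉ C ∧
      IsTangentAt C S P ∧ IsTangentAt C S Q ∧ dist S P ≠ dist S Q := by
  by_contra hcontra
  push_neg at hcontra
  have hCne : C.Nonempty := hint.mono interior_subset
  obtain ⟨A, hA, hAm'⟩ :=
    hcomp.exists_isMaxOn hCne ((innerSL ℝ (pt 0 1)).continuous.continuousOn)
  obtain ⟨B, hB, hBm'⟩ :=
    hcomp.exists_isMaxOn hCne ((innerSL ℝ (pt 0 (-1))).continuous.continuousOn)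
  have hAmax : ∀ x ∈ C, x 1 ≤ A 1 := by
    intro x hx
    have h := hAm' hx
    simp only [Set.mem_setOf_eq, innerSL_apply_apply, inner_expand, pt0, pt1,
      zero_mul, one_mul, zero_add] at h
    linarith
  have hBmin : ∀ x ∈ C, B 1 ≤ x 1 := by
    intro x hx
    have h := hBm' hx
    simp only [Set.mem_setOf_eq, innerSL_apply_apply, inner_expand, pt0, pt1,
      zero_mul, neg_one_mul, zero_add, neg_le_neg_iff] at h
    linarith
  set O : EuclideanSpace ℝ (Fin 2) := (2⁻¹ : ℝ) • (A + B) with hO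
  set rad : ℝ := (A 1 - B 1) / 2 with hradd
  have hrad0 : 0 ≤ rad := by
    have := hBmin A hA
    rw [hradd]; linarith
  have hinnerO : ∀ ν : EuclideanSpace ℝ (Fin 2),
      ⟪ν, O⟫ = (⟪ν, A⟫ + ⟪ν, B⟫) / 2 := by
    intro ν
    rw [hO, real_inner_smul_right, inner_add_right]
    ring
  have key : ∀ ν : EuclideanSpace ℝ (Fin 2), ‖ν‖ = 1 →
      ∃ P ∈ C, (∀ x ∈ C, ⟪ν, x⟫ ≤ ⟪ν, P⟫) ∧ ⟪ν, P⟫ = ⟪ν, O⟫ + rad := by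
    intro ν hν1
    obtain ⟨P, hP, hPm'⟩ :=
      hcomp.exists_isMaxOn hCne ((innerSL ℝ ν).continuous.continuousOn)
    have hPm : ∀ x ∈ C, ⟪ν, x⟫ ≤ ⟪ν, P⟫ := fun x hx => hPm' hx
    refine ⟨P, hP, hPm, ?_⟩
    rw [hinnerO, hradd]
    exact key_support hcomp hcontra hA hB hAmax hBmin hν1 hP hPm
  have hsub : C ⊆ Metric.closedBall O rad := by
    intro x hx
    rw [Metric.mem_closedBall]
    rcases eq_or_ne x O with rfl | hxO
    · simpa using hrad0
    · have hxO' : x - O ≠ 0 := sub_ne_zero.2 hxO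
      set ν := ‖x - O‖⁻¹ • (x - O) with hν
      have hν1 : ‖ν‖ = 1 := norm_smul_inv_norm hxO'
      obtain ⟨P, hP, hPm, hPv⟩ := key ν hν1
      have h1 : ⟪ν, x⟫ ≤ ⟪ν, O⟫ + rad := by rw [← hPv]; exact hPm x hx
      have h2 : ⟪ν, x - O⟫ = ‖x - O‖ := by
        rw [hν, real_inner_smul_left, real_inner_self_eq_norm_mul_norm]
        field_simp
      have h3 : ‖x - O‖ ≤ rad := by
        rw [← h2, inner_sub_right]
        linarith
      rw [dist_eq_norm]
      exact h3
  have hsup : Metric.closedBall O rad ⊆ C := by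
    intro y hy
    by_contra hyC
    obtain ⟨f, u, hfu, huf⟩ :=
      geometric_hahn_banach_closed_point hconv hcomp.isClosed hyC
    obtain ⟨v, hv⟩ :=
      (InnerProductSpace.toDual ℝ (EuclideanSpace ℝ (Fin 2))).surjective f
    have hvx : ∀ z, ⟪v, z⟫ = f z := by
      intro z
      rw [← hv, InnerProductSpace.toDual_apply_apply]
    have hv0 : v ≠ 0 := by
      rintro rfl
      obtain ⟨w, hw⟩ := hCne
      have h1 := hfu w hw
      have h2 : f w = 0 := by rw [← hvx]; simp
      have h3 : f y = 0 := by rw [← hvx]; simp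
      linarith
    set ν := ‖v‖⁻¹ • v with hν
    have hν1 : ‖ν‖ = 1 := norm_smul_inv_norm hv0
    obtain ⟨P, hP, hPm, hPv⟩ := key ν hν1
    have hvpos : (0:ℝ) < ‖v‖⁻¹ := inv_pos.2 (norm_pos_iff.2 hv0)
    have h1 : ⟪ν, P⟫ < ⟪ν, y⟫ := by
      rw [hν, real_inner_smul_left, real_inner_smul_left, hvx, hvx]
      exact mul_lt_mul_of_pos_left ((hfu P hP).trans huf) hvpos
    have h2 : rad < ⟪ν, y - O⟫ := by
      rw [inner_sub_right]
      linarith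
    have h3 : ⟪ν, y - O⟫ ≤ ‖y - O‖ := by
      calc ⟪ν, y - O⟫ ≤ ‖ν‖ * ‖y - O‖ := real_inner_le_norm _ _
        _ = ‖y - O‖ := by rw [hν1, one_mul]
    have h4 : dist y O ≤ rad := Metric.mem_closedBall.1 hy
    rw [dist_eq_norm] at h4
    linarith
  exact hnotdisc O rad (Set.Subset.antisymm hsub hsup)
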